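/- Extended Cheeger inequality with respect to the Rayleigh quotient: let L = (T D_W)^{-1/2}(D_W - W)(D_W T)^{-1/2} with τ_i ≥ 1. For any nonzero vector u orthogonal to the vector (sqrt(d_i τ_i))_i, order vertices v₁,...,vₙ so that g[v₁] ≥ ... ≥ g[vₙ] where g = (D_W T)^{-1/2} u, and let S_i = {v₁,...,v_i}. Then (min_i h_L(S_i))² / 2 ≤ (u^T L u)/(u^T u). -/

import Mathlib

open Matrix MeasureTheory Set


private lemma vol_Ico_inter {a b M : ℝ} (ha : 0 ≤ a) (hb : 0 ≤ b) (hbM : b ≤ M) :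
    (volume (Set.Ico a b ∩ Set.Ioc 0 M)).toReal = max (b - a) 0 := by
  rcases le_or_gt b a with hba | hab
  · have he : Set.Ico a b = ∅ := Set.Ico_eq_empty (not_lt.2 hba)
    rw [he, Set.empty_inter, measure_empty, max_eq_right (sub_nonpos.2 hba)]
    simp
  · rcases eq_or_lt_of_le ha with rfl | ha'
    · have : Set.Ico (0:ℝ) b ∩ Set.Ioc 0 M = Set.Ioo 0 b := by
        ext x
        constructor
        · rintro ⟨⟨h1, h2⟩, ⟨h3, h4⟩⟩; exact ⟨h3, h2⟩
        · rintro ⟨h1, h2⟩; exact ⟨⟨le_of_lt h1, h2⟩, h1, le_trans (le_of_lt h2) hbM⟩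
      rw [this, Real.volume_Ioo, ENNReal.toReal_ofReal (by linarith),
        max_eq_left (by linarith)]
    · have : Set.Ico a b ∩ Set.Ioc 0 M = Set.Ico a b :=
        Set.inter_eq_left.2 fun x hx =>
          ⟨lt_of_lt_of_le ha' hx.1, le_trans (le_of_lt hx.2) hbM⟩
      rw [this, Real.volume_Ico, ENNReal.toReal_ofReal (by linarith),
        max_eq_left (by linarith)]

private lemma sweep_coarea {n : ℕ} (W : Matrix (Fin n) (Fin n) ℝ)
    (c : Fin n → ℝ) (hc : ∀ i, 0 ≤ c i)
    (w : Fin n → ℝ) (hw : ∀ i, 0 ≤ w i) (h : ℝ)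
    (H : ∀ t : ℝ, 0 < t → (Finset.univ.filter (fun i => t < w i)).Nonempty →
       h * ∑ i ∈ Finset.univ.filter (fun i => t < w i), c i ≤
       ∑ i ∈ Finset.univ.filter (fun i => t < w i),
         ∑ j ∈ (Finset.univ.filter (fun i => t < w i))ᶜ, W i j) :
    h * ∑ i, c i * w i ≤ ∑ i, ∑ j, W i j * max (w i - w j) 0 := by
  set M : ℝ := (∑ i, w i) + 1 with hM
  have hsum_nonneg : 0 ≤ ∑ i, w i := Finset.sum_nonneg fun i _ => hw i
  have hM0 : 0 < M := by rw [hM]; linarith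
  have hwM : ∀ i, w i ≤ M := by
    intro i
    have := Finset.single_le_sum (f := w) (fun j _ => hw j) (Finset.mem_univ i)
    rw [hM]; linarith
  set μ := volume.restrict (Set.Ioc (0:ℝ) M) with hμ
  set F : ℝ → ℝ := fun t => ∑ i, (Set.Ioo 0 (w i)).indicator (fun _ => c i) t with hF
  set G : ℝ → ℝ := fun t => ∑ p : Fin n × Fin n,
      (Set.Ico (w p.2) (w p.1)).indicator (fun _ => W p.1 p.2) t with hG
  have hintF1 : ∀ i : Fin n, Integrable ((Set.Ioo 0 (w i)).indicator (fun _ => c i)) μ := by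
    intro i
    rw [integrable_indicator_iff measurableSet_Ioo]
    refine integrableOn_const (ne_of_lt ?_)
    rw [hμ, Measure.restrict_apply measurableSet_Ioo]
    exact lt_of_le_of_lt (measure_mono Set.inter_subset_left)
      (by rw [Real.volume_Ioo]; exact ENNReal.ofReal_lt_top)
  have hintG1 : ∀ p : Fin n × Fin n,
      Integrable ((Set.Ico (w p.2) (w p.1)).indicator (fun _ => W p.1 p.2)) μ := by
    intro p
    rw [integrable_indicator_iff measurableSet_Ico]
    refine integrableOn_const (ne_of_lt ?_)
    rw [hμ, Measure.restrict_apply measurableSet_Ico]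
    exact lt_of_le_of_lt (measure_mono Set.inter_subset_left)
      (by rw [Real.volume_Ico]; exact ENNReal.ofReal_lt_top)
  have hintF : Integrable F μ := integrable_finset_sum _ (fun i _ => hintF1 i)
  have hintG : Integrable G μ := integrable_finset_sum _ (fun p _ => hintG1 p)
  have hIF : ∫ t, F t ∂μ = ∑ i, c i * w i := by
    rw [hF, integral_finset_sum _ (fun i _ => hintF1 i)]
    refine Finset.sum_congr rfl fun i _ => ?_
    rw [integral_indicator_const _ measurableSet_Ioo, smul_eq_mul]
    have h1 : μ (Set.Ioo 0 (w i)) = ENNReal.ofReal (w i) := by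
      rw [hμ, Measure.restrict_apply measurableSet_Ioo,
        Set.inter_eq_left.2 (fun x hx => Set.mem_Ioc.2
          ⟨(Set.mem_Ioo.1 hx).1, le_trans (le_of_lt (Set.mem_Ioo.1 hx).2) (hwM i)⟩),
        Real.volume_Ioo, sub_zero]
    rw [measureReal_def, h1, ENNReal.toReal_ofReal (hw i), mul_comm]
  have hsplit : ∀ (f : Fin n × Fin n → ℝ), ∑ p : Fin n × Fin n, f p = ∑ i, ∑ j, f (i, j) := by
    intro f; rw [← Finset.univ_product_univ, Finset.sum_product]
  have hIG : ∫ t, G t ∂μ = ∑ i, ∑ j, W i j * max (w i - w j) 0 := by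
    rw [hG, integral_finset_sum _ (fun p _ => hintG1 p),
      hsplit (fun p => ∫ t, (Set.Ico (w p.2) (w p.1)).indicator (fun _ => W p.1 p.2) t ∂μ)]
    refine Finset.sum_congr rfl fun i _ => Finset.sum_congr rfl fun j _ => ?_
    rw [integral_indicator_const _ measurableSet_Ico, smul_eq_mul, measureReal_def,
      hμ, Measure.restrict_apply measurableSet_Ico,
      vol_Ico_inter (hw j) (hw i) (hwM i), mul_comm]
  have hpt : ∀ t ∈ Set.Ioc (0:ℝ) M, h * F t ≤ G t := by
    intro t ht
    have hFt : F t = ∑ i ∈ Finset.univ.filter (fun i => t < w i), c i := by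
      rw [hF, Finset.sum_filter]
      refine Finset.sum_congr rfl fun i _ => ?_
      rw [Set.indicator_apply]
      by_cases hi : t < w i
      · rw [if_pos (Set.mem_Ioo.2 ⟨ht.1, hi⟩), if_pos hi]
      · rw [if_neg (fun hmem => hi (Set.mem_Ioo.1 hmem).2), if_neg hi]
    have hGt : G t = ∑ i ∈ Finset.univ.filter (fun i => t < w i),
        ∑ j ∈ (Finset.univ.filter (fun i => t < w i))ᶜ, W i j := by
      rw [hG]
      dsimp only
      rw [hsplit (fun p => (Set.Ico (w p.2) (w p.1)).indicator (fun _ => W p.1 p.2) t),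
        Finset.compl_filter]
      simp only [Finset.sum_filter]
      refine Finset.sum_congr rfl fun i _ => ?_
      by_cases hi : t < w i
      · rw [if_pos hi]
        refine Finset.sum_congr rfl fun j _ => ?_
        rw [Set.indicator_apply]
        by_cases hj : t < w j
        · rw [if_neg (fun hmem => absurd (Set.mem_Ico.1 hmem).1 (not_le.2 hj)),
            if_neg (fun hh => hh hj)]
        · rw [if_pos (Set.mem_Ico.2 ⟨not_lt.1 hj, hi⟩), if_pos hj]
      · rw [if_neg hi]
        exact Finset.sum_eq_zero fun j _ => by
          rw [Set.indicator_apply, if_neg (fun hmem => hi (Set.mem_Ico.1 hmem).2)]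
    rw [hFt, hGt]
    rcases Finset.eq_empty_or_nonempty (Finset.univ.filter (fun i => t < w i)) with he | hne
    · rw [he]; simp
    · exact H t ht.1 hne
  calc h * ∑ i, c i * w i = h * ∫ t, F t ∂μ := by rw [hIF]
    _ = ∫ t, h * F t ∂μ := (integral_const_mul h F).symm
    _ ≤ ∫ t, G t ∂μ := by
        refine integral_mono_ae (hintF.const_mul h) hintG ?_
        rw [hμ]
        exact (ae_restrict_iff' measurableSet_Ioc).2 (Filter.Eventually.of_forall hpt)
    _ = ∑ i, ∑ j, W i j * max (w i - w j) 0 := hIG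


private lemma pair_split {n : ℕ} (f : Fin n × Fin n → ℝ) :
    ∑ p : Fin n × Fin n, f p = ∑ i, ∑ j, f (i, j) := by
  rw [← Finset.univ_product_univ, Finset.sum_product]

private lemma chain_bound {n : ℕ} (W : Matrix (Fin n) (Fin n) ℝ) (hWs : ∀ i j, W j i = W i j)
    (hWnn : ∀ i j, 0 ≤ W i j) (Δ : Fin n → ℝ) (hΔ : ∀ i, 0 ≤ Δ i)
    (hdeg : ∀ i, (∑ j, W i j) ≤ Δ i)
    (r : Fin n → ℝ) (hr : ∀ i, 0 ≤ r i) (h : ℝ) (hh : 0 ≤ h)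
    (hco : h * ∑ i, Δ i * (r i)^2 ≤ ∑ i, ∑ j, W i j * max ((r i)^2 - (r j)^2) 0) :
    h^2 * ∑ i, Δ i * (r i)^2 ≤ ∑ i, ∑ j, W i j * (r i - r j)^2 := by
  set D := ∑ i, Δ i * (r i)^2 with hD
  set A := ∑ i, ∑ j, W i j * max ((r i)^2 - (r j)^2) 0 with hA
  set f : Fin n × Fin n → ℝ := fun p => Real.sqrt (W p.1 p.2) * |r p.1 - r p.2| with hf
  set gg : Fin n × Fin n → ℝ := fun p => Real.sqrt (W p.1 p.2) * (r p.1 + r p.2) with hgg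
  set B := ∑ p : Fin n × Fin n, f p * gg p with hB
  set N := ∑ p : Fin n × Fin n, W p.1 p.2 * (r p.1 - r p.2)^2 with hN
  have hD0 : 0 ≤ D := Finset.sum_nonneg fun i _ => mul_nonneg (hΔ i) (sq_nonneg _)
  have hN0 : 0 ≤ N := Finset.sum_nonneg fun p _ => mul_nonneg (hWnn _ _) (sq_nonneg _)
  have hB0 : 0 ≤ B := Finset.sum_nonneg fun p _ => mul_nonneg
    (mul_nonneg (Real.sqrt_nonneg _) (abs_nonneg _))
    (mul_nonneg (Real.sqrt_nonneg _) (add_nonneg (hr _) (hr _)))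
  -- B = 2 * A
  have hBA : B = 2 * A := by
    have h1 : ∀ p : Fin n × Fin n, f p * gg p =
        W p.1 p.2 * max ((r p.1)^2 - (r p.2)^2) 0 +
        W p.1 p.2 * max ((r p.2)^2 - (r p.1)^2) 0 := by
      intro p
      have hs : Real.sqrt (W p.1 p.2) * Real.sqrt (W p.1 p.2) = W p.1 p.2 :=
        Real.mul_self_sqrt (hWnn _ _)
      have habs : |r p.1 - r p.2| * (r p.1 + r p.2) =
          max ((r p.1)^2 - (r p.2)^2) 0 + max ((r p.2)^2 - (r p.1)^2) 0 := by
        rcases le_total (r p.2) (r p.1) with hle | hle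
        · rw [abs_of_nonneg (by linarith), max_eq_left (by nlinarith [hr p.1, hr p.2]),
            max_eq_right (by nlinarith [hr p.1, hr p.2])]
          ring
        · rw [abs_of_nonpos (by linarith), max_eq_right (by nlinarith [hr p.1, hr p.2]),
            max_eq_left (by nlinarith [hr p.1, hr p.2])]
          ring
      calc f p * gg p = (Real.sqrt (W p.1 p.2) * Real.sqrt (W p.1 p.2)) *
            (|r p.1 - r p.2| * (r p.1 + r p.2)) := by rw [hf, hgg]; ring
        _ = W p.1 p.2 * (max ((r p.1)^2 - (r p.2)^2) 0 + max ((r p.2)^2 - (r p.1)^2) 0) := by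
            rw [hs, habs]
        _ = _ := by ring
    have hswap : ∑ p : Fin n × Fin n, W p.1 p.2 * max ((r p.2)^2 - (r p.1)^2) 0 =
        ∑ p : Fin n × Fin n, W p.1 p.2 * max ((r p.1)^2 - (r p.2)^2) 0 := by
      refine Fintype.sum_equiv (Equiv.prodComm _ _) _ _ fun p => ?_
      simp only [Equiv.prodComm_apply, Prod.fst_swap, Prod.snd_swap]
      rw [hWs p.1 p.2]
    rw [hB, Finset.sum_congr rfl fun p _ => h1 p, Finset.sum_add_distrib, hswap, hA,
      ← pair_split (fun p => W p.1 p.2 * max ((r p.1)^2 - (r p.2)^2) 0)]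
    ring
  -- Cauchy-Schwarz
  have hCS : B^2 ≤ N * ∑ p : Fin n × Fin n, gg p ^ 2 := by
    have := Finset.sum_mul_sq_le_sq_mul_sq Finset.univ f gg
    have hf2 : ∑ p : Fin n × Fin n, f p ^ 2 = N := by
      refine Finset.sum_congr rfl fun p _ => ?_
      rw [hf]
      rw [mul_pow, Real.sq_sqrt (hWnn _ _), sq_abs]
    rw [hB, ← hf2]
    exact this
  -- bound on sum gg^2
  have hgg4 : ∑ p : Fin n × Fin n, gg p ^ 2 ≤ 4 * D := by
    have step1 : ∑ p : Fin n × Fin n, gg p ^ 2 ≤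
        ∑ i, ∑ j, (2 * W i j * (r i)^2 + 2 * W i j * (r j)^2) := by
      rw [pair_split (fun p => gg p ^ 2)]
      refine Finset.sum_le_sum fun i _ => Finset.sum_le_sum fun j _ => ?_
      rw [hgg, mul_pow, Real.sq_sqrt (hWnn _ _)]
      nlinarith [hWnn i j, sq_nonneg (r i - r j), sq_nonneg (r i + r j)]
    refine le_trans step1 ?_
    have e1 : ∑ i, ∑ j, (2 * W i j * (r i)^2 + 2 * W i j * (r j)^2) =
        (∑ i, 2 * (r i)^2 * (∑ j, W i j)) + (∑ j, 2 * (r j)^2 * (∑ i, W j i)) := by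
      rw [Finset.sum_congr rfl fun i (_ : i ∈ Finset.univ) => Finset.sum_add_distrib,
        Finset.sum_add_distrib]
      congr 1
      · refine Finset.sum_congr rfl fun i _ => ?_
        rw [Finset.mul_sum]
        exact Finset.sum_congr rfl fun j _ => by ring
      · rw [Finset.sum_comm]
        refine Finset.sum_congr rfl fun j _ => ?_
        rw [Finset.mul_sum]
        refine Finset.sum_congr rfl fun i _ => ?_
        rw [hWs j i]
        ring
    rw [e1]
    have b1 : ∑ i, 2 * (r i)^2 * (∑ j, W i j) ≤ 2 * D := by
      rw [hD, Finset.mul_sum]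
      refine Finset.sum_le_sum fun i _ => ?_
      have hnn : (0:ℝ) ≤ 2 * (r i)^2 := by positivity
      have := mul_le_mul_of_nonneg_left (hdeg i) hnn
      calc 2 * (r i)^2 * (∑ j, W i j) = (2 * (r i)^2) * (∑ j, W i j) := by ring
        _ ≤ (2 * (r i)^2) * Δ i := this
        _ = 2 * (Δ i * (r i)^2) := by ring
    have b2 : ∑ j, 2 * (r j)^2 * (∑ i, W j i) ≤ 2 * D := by
      rw [hD, Finset.mul_sum]
      refine Finset.sum_le_sum fun i _ => ?_
      have hnn : (0:ℝ) ≤ 2 * (r i)^2 := by positivity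
      have := mul_le_mul_of_nonneg_left (hdeg i) hnn
      calc 2 * (r i)^2 * (∑ j, W i j) = (2 * (r i)^2) * (∑ j, W i j) := by ring
        _ ≤ (2 * (r i)^2) * Δ i := this
        _ = 2 * (Δ i * (r i)^2) := by ring
    linarith
  -- combine
  have hkey : (2 * (h * D))^2 ≤ N * (4 * D) := by
    have h2hD : 2 * (h * D) ≤ B := by rw [hBA]; linarith [hco]
    have h2hD0 : 0 ≤ 2 * (h * D) := by positivity
    calc (2 * (h * D))^2 ≤ B^2 := by
          exact pow_le_pow_left₀ h2hD0 h2hD 2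
      _ ≤ N * ∑ p : Fin n × Fin n, gg p ^ 2 := hCS
      _ ≤ N * (4 * D) := mul_le_mul_of_nonneg_left hgg4 hN0
  have hNsum : N = ∑ i, ∑ j, W i j * (r i - r j)^2 :=
    pair_split (fun p => W p.1 p.2 * (r p.1 - r p.2)^2)
  rw [← hNsum]
  rcases eq_or_lt_of_le hD0 with hDz | hDpos
  · rw [← hDz]; simpa using hN0
  · nlinarith [hkey, hDpos]


private lemma prefix_finset {n : ℕ} (σ : Equiv.Perm (Fin n)) (A : Finset (Fin n))
    (hA : ∀ k l : Fin n, k ≤ l → σ l ∈ A → σ k ∈ A) (hne : A.Nonempty) :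
    ∃ k : Fin n, A = Finset.image (⇑σ) (Finset.Iic k) := by
  have hBne : (Finset.univ.filter (fun j => σ j ∈ A)).Nonempty := by
    obtain ⟨i, hi⟩ := hne
    exact ⟨σ.symm i, Finset.mem_filter.2 ⟨Finset.mem_univ _, by simpa using hi⟩⟩
  set k := (Finset.univ.filter (fun j => σ j ∈ A)).max' hBne with hk
  have hkA : σ k ∈ A := (Finset.mem_filter.1 ((Finset.univ.filter
    (fun j => σ j ∈ A)).max'_mem hBne)).2
  refine ⟨k, ?_⟩
  ext i
  simp only [Finset.mem_image, Finset.mem_Iic]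
  constructor
  · intro hi
    refine ⟨σ.symm i, ?_, by simp⟩
    apply Finset.le_max'
    exact Finset.mem_filter.2 ⟨Finset.mem_univ _, by simpa using hi⟩
  · rintro ⟨j, hj, rfl⟩
    exact hA j k hj hkA

private lemma posneg_sq (a b : ℝ) :
    (max a 0 - max b 0)^2 + (max (-a) 0 - max (-b) 0)^2 ≤ (a - b)^2 := by
  rcases le_total a 0 with ha | ha <;> rcases le_total b 0 with hb | hb
  · rw [max_eq_right ha, max_eq_right hb, max_eq_left (by linarith), max_eq_left (by linarith)]
    nlinarith
  · rw [max_eq_right ha, max_eq_left hb, max_eq_left (by linarith), max_eq_right (by linarith)]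
    nlinarith
  · rw [max_eq_left ha, max_eq_right hb, max_eq_right (by linarith), max_eq_left (by linarith)]
    nlinarith
  · rw [max_eq_left ha, max_eq_left hb, max_eq_right (by linarith), max_eq_right (by linarith)]
    nlinarith

private lemma laplacian_quadratic {n : ℕ} (W : Matrix (Fin n) (Fin n) ℝ)
    (hWs : ∀ i j, W j i = W i j) (g : Fin n → ℝ) :
    ∑ i, ∑ j, W i j * (g i - g j)^2 =
      2 * ((∑ i, (∑ j, W i j) * (g i)^2) - ∑ i, ∑ j, W i j * (g i * g j)) := by
  have e1 : ∀ i, ∑ j, W i j * (g i - g j)^2 =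
      (∑ j, W i j) * (g i)^2 - 2 * (∑ j, W i j * (g i * g j)) + ∑ j, W i j * (g j)^2 := by
    intro i
    have e0 : ∀ j, W i j * (g i - g j)^2 =
        W i j * (g i)^2 - 2*(W i j * (g i * g j)) + W i j * (g j)^2 := fun j => by ring
    rw [Finset.sum_congr rfl fun j (_ : j ∈ Finset.univ) => e0 j, Finset.sum_add_distrib,
      Finset.sum_sub_distrib, ← Finset.sum_mul, ← Finset.mul_sum]
  rw [Finset.sum_congr rfl fun i (_ : i ∈ Finset.univ) => e1 i]
  rw [Finset.sum_add_distrib, Finset.sum_sub_distrib]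
  have e2 : ∑ i, ∑ j, W i j * (g j)^2 = ∑ i, (∑ j, W i j) * (g i)^2 := by
    rw [Finset.sum_comm]
    refine Finset.sum_congr rfl fun j _ => ?_
    rw [Finset.sum_mul]
    exact Finset.sum_congr rfl fun i _ => by rw [hWs j i]
  rw [e2]
  have e3 : ∑ i, 2 * (∑ j, W i j * (g i * g j)) = 2 * ∑ i, ∑ j, W i j * (g i * g j) := by
    rw [Finset.mul_sum]
  rw [e3]
  ring




/-- extended Cheeger inequality with respect to the Rayleigh quotient:
for any nonzero `u` orthogonal to `(sqrt(d_i τ_i))_i`, sweeping the vertices in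
nonincreasing order of `g = (D_W T)^{-1/2} u` yields sweep sets `S_k` with
`(min_k h_L(S_k))² / 2 ≤ u^T L u / u^T u`. -/
theorem extended_cheeger_rayleigh
    {n : ℕ} (hn : 1 < n) (W : Matrix (Fin n) (Fin n) ℝ) (hWsymm : W.IsSymm)
    (hWnn : ∀ i j, 0 ≤ W i j) (d τ : Fin n → ℝ)
    (hd : ∀ i, d i = ∑ j, W i j) (hdpos : ∀ i, 0 < d i) (hτ : ∀ i, 1 ≤ τ i)
    (L : Matrix (Fin n) (Fin n) ℝ)
    (hL : L = Matrix.diagonal (fun i => (Real.sqrt (d i * τ i))⁻¹) *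
        (Matrix.diagonal d - W) *
        Matrix.diagonal (fun i => (Real.sqrt (d i * τ i))⁻¹))
    (u : Fin n → ℝ) (hu : u ≠ 0)
    (horth : (u ⬝ᵥ fun i => Real.sqrt (d i * τ i)) = 0)
    (g : Fin n → ℝ) (hg : ∀ i, g i = u i / Real.sqrt (d i * τ i))
    (σ : Equiv.Perm (Fin n))
    (hsweep : ∀ k l : Fin n, k ≤ l → g (σ l) ≤ g (σ k)) :
    (sInf {r : ℝ | ∃ k : Fin n,
        (Finset.image (⇑σ) (Finset.Iic k) : Finset (Fin n)) ≠ Finset.univ ∧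
        r = (∑ i ∈ Finset.image (⇑σ) (Finset.Iic k),
              ∑ j ∈ (Finset.image (⇑σ) (Finset.Iic k))ᶜ, W i j) /
          min (∑ i ∈ Finset.image (⇑σ) (Finset.Iic k), d i * τ i)
              (∑ i ∈ (Finset.image (⇑σ) (Finset.Iic k))ᶜ, d i * τ i)}) ^ 2 / 2
      ≤ (u ⬝ᵥ (L *ᵥ u)) / (u ⬝ᵥ u) := by
  classical
  have hΔpos : ∀ i, 0 < d i * τ i :=
    fun i => mul_pos (hdpos i) (lt_of_lt_of_le one_pos (hτ i))
  have hsq : ∀ i, 0 < Real.sqrt (d i * τ i) := fun i => Real.sqrt_pos.2 (hΔpos i)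
  have hWs : ∀ i j, W j i = W i j := fun i j => congrFun (congrFun hWsymm i) j
  have hu_eq : ∀ i, u i = g i * Real.sqrt (d i * τ i) := by
    intro i
    rw [hg i, div_mul_cancel₀ _ (ne_of_gt (hsq i))]
  have hss : ∀ i, Real.sqrt (d i * τ i) * Real.sqrt (d i * τ i) = d i * τ i :=
    fun i => Real.mul_self_sqrt (le_of_lt (hΔpos i))
  -- the sweep set family and its infimum
  set S : Set ℝ := {r : ℝ | ∃ k : Fin n,
        (Finset.image (⇑σ) (Finset.Iic k) : Finset (Fin n)) ≠ Finset.univ ∧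
        r = (∑ i ∈ Finset.image (⇑σ) (Finset.Iic k),
              ∑ j ∈ (Finset.image (⇑σ) (Finset.Iic k))ᶜ, W i j) /
          min (∑ i ∈ Finset.image (⇑σ) (Finset.Iic k), d i * τ i)
              (∑ i ∈ (Finset.image (⇑σ) (Finset.Iic k))ᶜ, d i * τ i)} with hSdef
  set h := sInf S with hhdef
  have hS0 : ∀ x ∈ S, 0 ≤ x := by
    rintro x ⟨k, hk, rfl⟩
    refine div_nonneg (Finset.sum_nonneg fun i _ => Finset.sum_nonneg fun j _ => hWnn i j) ?_
    exact le_min (Finset.sum_nonneg fun i _ => le_of_lt (hΔpos i))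
      (Finset.sum_nonneg fun i _ => le_of_lt (hΔpos i))
  have hbdd : BddBelow S := ⟨0, fun x hx => hS0 x hx⟩
  have hh0 : 0 ≤ h := Real.sInf_nonneg hS0
  -- total volume
  have hV0 : 0 < ∑ i, d i * τ i := by
    haveI : Nonempty (Fin n) := ⟨⟨0, by omega⟩⟩
    exact Finset.sum_pos (fun i _ => hΔpos i) Finset.univ_nonempty
  have vol_compl : ∀ A : Finset (Fin n),
      ∑ i ∈ Aᶜ, d i * τ i = (∑ i, d i * τ i) - ∑ i ∈ A, d i * τ i := by
    intro A
    have := Finset.sum_add_sum_compl A (fun i => d i * τ i)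
    linarith
  -- the median index m
  have hPne : (Finset.univ.filter
      (fun k : Fin n => (∑ i, d i * τ i) ≤ 2 * ∑ j ∈ Finset.Iic k, d (σ j) * τ (σ j))).Nonempty := by
    refine ⟨⟨n-1, by omega⟩, Finset.mem_filter.2 ⟨Finset.mem_univ _, ?_⟩⟩
    have hIicAll : Finset.Iic (⟨n-1, by omega⟩ : Fin n) = Finset.univ := by
      ext j
      simp only [Finset.mem_Iic, Finset.mem_univ, iff_true, Fin.le_def]
      omega
    rw [hIicAll]
    have hcomp : ∑ j, d (σ j) * τ (σ j) = ∑ i, d i * τ i :=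
      Equiv.sum_comp σ (fun i => d i * τ i)
    rw [hcomp]
    linarith
  set m := (Finset.univ.filter
      (fun k : Fin n => (∑ i, d i * τ i) ≤ 2 * ∑ j ∈ Finset.Iic k, d (σ j) * τ (σ j))).min' hPne
    with hmdef
  have hmP : (∑ i, d i * τ i) ≤ 2 * ∑ j ∈ Finset.Iic m, d (σ j) * τ (σ j) :=
    (Finset.mem_filter.1 (Finset.min'_mem _ hPne)).2
  have hlow : 2 * ∑ j ∈ Finset.Iio m, d (σ j) * τ (σ j) < ∑ i, d i * τ i := by
    rcases Nat.eq_zero_or_pos m.val with h0 | hposm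
    · have hIio : Finset.Iio m = ∅ := by
        ext j
        simp only [Finset.mem_Iio, Finset.notMem_empty, iff_false, Fin.lt_def, h0]
        omega
      rw [hIio]
      simpa using hV0
    · obtain ⟨k1, hk1v⟩ : ∃ k1 : Fin n, k1.val = m.val - 1 := ⟨⟨m.val - 1, by omega⟩, rfl⟩
      have hkm : k1 < m := by
        rw [Fin.lt_def, hk1v]
        omega
      have hIio : Finset.Iio m = Finset.Iic k1 := by
        ext j
        rw [Finset.mem_Iio, Finset.mem_Iic, Fin.lt_def, Fin.le_def, hk1v]
        omega
      have hnot : ¬ ((∑ i, d i * τ i) ≤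
          2 * ∑ j ∈ Finset.Iic k1, d (σ j) * τ (σ j)) := by
        intro hcon
        have hmem1 : k1 ∈ Finset.univ.filter (fun k : Fin n =>
            (∑ i, d i * τ i) ≤ 2 * ∑ j ∈ Finset.Iic k, d (σ j) * τ (σ j)) :=
          Finset.mem_filter.2 ⟨Finset.mem_univ _, hcon⟩
        have hmle := Finset.min'_le _ k1 hmem1
        rw [← hmdef] at hmle
        exact absurd (lt_of_le_of_lt hmle hkm) (lt_irrefl _)
      rw [hIio]
      linarith
  -- shifted positive and negative parts
  set c := g (σ m) with hcdef
  set p : Fin n → ℝ := fun i => max (g i - c) 0 with hpdef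
  set q : Fin n → ℝ := fun i => max (c - g i) 0 with hqdef
  have hp0 : ∀ i, 0 ≤ p i := fun i => le_max_right _ _
  have hq0 : ∀ i, 0 ≤ q i := fun i => le_max_right _ _
  have hpg : ∀ i j : Fin n, g j ≤ g i → p j ≤ p i :=
    fun i j hij => max_le_max (by linarith) le_rfl
  have hqg : ∀ i j : Fin n, g j ≤ g i → q i ≤ q j :=
    fun i j hij => max_le_max (by linarith) le_rfl
  -- support bounds
  have hsubp : Finset.univ.filter (fun i => 0 < p i) ⊆ Finset.image (⇑σ) (Finset.Iio m) := by
    intro i hi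
    have hgi : c < g i := by
      have h2 := (Finset.mem_filter.1 hi).2
      by_contra hge
      push_neg at hge
      have : p i = 0 := max_eq_right (by linarith)
      rw [this] at h2
      exact absurd h2 (lt_irrefl _)
    refine Finset.mem_image.2 ⟨σ.symm i, ?_, by simp⟩
    rw [Finset.mem_Iio]
    by_contra hge
    push_neg at hge
    have := hsweep m (σ.symm i) hge
    rw [Equiv.apply_symm_apply] at this
    rw [hcdef] at hgi
    linarith
  have hsubq : Finset.univ.filter (fun i => 0 < q i) ⊆ Finset.image (⇑σ) (Finset.Ioi m) := by
    intro i hi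
    have hgi : g i < c := by
      have h2 := (Finset.mem_filter.1 hi).2
      by_contra hge
      push_neg at hge
      have : q i = 0 := max_eq_right (by linarith)
      rw [this] at h2
      exact absurd h2 (lt_irrefl _)
    refine Finset.mem_image.2 ⟨σ.symm i, ?_, by simp⟩
    rw [Finset.mem_Ioi]
    by_contra hge
    push_neg at hge
    have := hsweep (σ.symm i) m hge
    rw [Equiv.apply_symm_apply] at this
    rw [hcdef] at hgi
    linarith
  have Hp : 2 * ∑ i ∈ Finset.univ.filter (fun i => 0 < p i), d i * τ i < ∑ i, d i * τ i := by
    have h1 : ∑ i ∈ Finset.univ.filter (fun i => 0 < p i), d i * τ i ≤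
        ∑ i ∈ Finset.image (⇑σ) (Finset.Iio m), d i * τ i :=
      Finset.sum_le_sum_of_subset_of_nonneg hsubp (fun i _ _ => le_of_lt (hΔpos i))
    have h2 : ∑ i ∈ Finset.image (⇑σ) (Finset.Iio m), d i * τ i =
        ∑ j ∈ Finset.Iio m, d (σ j) * τ (σ j) :=
      Finset.sum_image (fun a _ b _ hab => σ.injective hab)
    linarith
  have Hq : 2 * ∑ i ∈ Finset.univ.filter (fun i => 0 < q i), d i * τ i ≤ ∑ i, d i * τ i := by
    have h1 : ∑ i ∈ Finset.univ.filter (fun i => 0 < q i), d i * τ i ≤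
        ∑ i ∈ Finset.image (⇑σ) (Finset.Ioi m), d i * τ i :=
      Finset.sum_le_sum_of_subset_of_nonneg hsubq (fun i _ _ => le_of_lt (hΔpos i))
    have h2 : ∑ i ∈ Finset.image (⇑σ) (Finset.Ioi m), d i * τ i =
        ∑ j ∈ Finset.Ioi m, d (σ j) * τ (σ j) :=
      Finset.sum_image (fun a _ b _ hab => σ.injective hab)
    have h3 : Finset.Ioi m = (Finset.Iic m)ᶜ := by
      ext j
      simp
    have h4 : ∑ j ∈ (Finset.Iic m)ᶜ, d (σ j) * τ (σ j) =
        (∑ j, d (σ j) * τ (σ j)) - ∑ j ∈ Finset.Iic m, d (σ j) * τ (σ j) := by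
      have := Finset.sum_add_sum_compl (Finset.Iic m) (fun j => d (σ j) * τ (σ j))
      linarith
    have hcomp : ∑ j, d (σ j) * τ (σ j) = ∑ i, d i * τ i :=
      Equiv.sum_comp σ (fun i => d i * τ i)
    have h5 : ∑ j ∈ Finset.Ioi m, d (σ j) * τ (σ j)
        = (∑ i, d i * τ i) - ∑ j ∈ Finset.Iic m, d (σ j) * τ (σ j) := by
      rw [h3, ← hcomp]
      exact h4
    linarith
  -- sweep hypothesis, p side
  have HHp : ∀ t : ℝ, 0 < t → (Finset.univ.filter (fun i => t < (p i)^2)).Nonempty →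
      h * ∑ i ∈ Finset.univ.filter (fun i => t < (p i)^2), d i * τ i ≤
      ∑ i ∈ Finset.univ.filter (fun i => t < (p i)^2),
        ∑ j ∈ (Finset.univ.filter (fun i => t < (p i)^2))ᶜ, W i j := by
    intro t ht hne
    set Et := Finset.univ.filter (fun i => t < (p i)^2) with hEtdef
    have hdc : ∀ k l : Fin n, k ≤ l → σ l ∈ Et → σ k ∈ Et := by
      intro k l hkl hl
      have h1 : p (σ l) ≤ p (σ k) := hpg _ _ (hsweep k l hkl)
      have h2 := (Finset.mem_filter.1 hl).2
      exact Finset.mem_filter.2 ⟨Finset.mem_univ _,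
        lt_of_lt_of_le h2 (pow_le_pow_left₀ (hp0 _) h1 2)⟩
    obtain ⟨k, hkeq⟩ := prefix_finset σ Et hdc hne
    have hEtsub : Et ⊆ Finset.univ.filter (fun i => 0 < p i) := by
      intro i hi
      have h2 := (Finset.mem_filter.1 hi).2
      refine Finset.mem_filter.2 ⟨Finset.mem_univ _, ?_⟩
      rcases lt_or_eq_of_le (hp0 i) with hlt | heq
      · exact hlt
      · rw [← heq] at h2
        norm_num at h2
        linarith
    have hvolEt : 2 * ∑ i ∈ Et, d i * τ i < ∑ i, d i * τ i := by
      have := Finset.sum_le_sum_of_subset_of_nonneg hEtsub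
        (fun i _ _ => le_of_lt (hΔpos i))
      linarith
    have hEtne : Et ≠ Finset.univ := by
      intro heq
      rw [heq] at hvolEt
      linarith
    have hvolpos : 0 < ∑ i ∈ Et, d i * τ i := Finset.sum_pos (fun i _ => hΔpos i) hne
    have hmem : ((∑ i ∈ Et, ∑ j ∈ Etᶜ, W i j) /
        min (∑ i ∈ Et, d i * τ i) (∑ i ∈ Etᶜ, d i * τ i)) ∈ S := by
      rw [hSdef]
      simp only [Set.mem_setOf_eq]
      refine ⟨k, ?_, ?_⟩
      · rw [← hkeq]; exact hEtne
      · rw [← hkeq]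
    have hlehk : h ≤ (∑ i ∈ Et, ∑ j ∈ Etᶜ, W i j) /
        min (∑ i ∈ Et, d i * τ i) (∑ i ∈ Etᶜ, d i * τ i) := csInf_le hbdd hmem
    have hmin : min (∑ i ∈ Et, d i * τ i) (∑ i ∈ Etᶜ, d i * τ i) = ∑ i ∈ Et, d i * τ i := by
      rw [vol_compl Et]
      apply min_eq_left
      linarith
    rw [hmin] at hlehk
    exact (le_div_iff₀ hvolpos).1 hlehk
  -- sweep hypothesis, q side
  have HHq : ∀ t : ℝ, 0 < t → (Finset.univ.filter (fun i => t < (q i)^2)).Nonempty →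
      h * ∑ i ∈ Finset.univ.filter (fun i => t < (q i)^2), d i * τ i ≤
      ∑ i ∈ Finset.univ.filter (fun i => t < (q i)^2),
        ∑ j ∈ (Finset.univ.filter (fun i => t < (q i)^2))ᶜ, W i j := by
    intro t ht hne
    set Et := Finset.univ.filter (fun i => t < (q i)^2) with hEtdef
    have hEtsub : Et ⊆ Finset.univ.filter (fun i => 0 < q i) := by
      intro i hi
      have h2 := (Finset.mem_filter.1 hi).2
      refine Finset.mem_filter.2 ⟨Finset.mem_univ _, ?_⟩
      rcases lt_or_eq_of_le (hq0 i) with hlt | heq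
      · exact hlt
      · rw [← heq] at h2
        norm_num at h2
        linarith
    have hvolEt : 2 * ∑ i ∈ Et, d i * τ i ≤ ∑ i, d i * τ i := by
      have := Finset.sum_le_sum_of_subset_of_nonneg hEtsub
        (fun i _ _ => le_of_lt (hΔpos i))
      linarith
    have hvolpos : 0 < ∑ i ∈ Et, d i * τ i := Finset.sum_pos (fun i _ => hΔpos i) hne
    have hcone : (Etᶜ).Nonempty := by
      by_contra h0
      rw [Finset.not_nonempty_iff_eq_empty, Finset.compl_eq_empty_iff] at h0
      rw [h0] at hvolEt
      linarith
    have hdc : ∀ k l : Fin n, k ≤ l → σ l ∈ Etᶜ → σ k ∈ Etᶜ := by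
      intro k l hkl hl
      rw [Finset.mem_compl] at hl ⊢
      intro hk
      apply hl
      have h1 : q (σ k) ≤ q (σ l) := hqg _ _ (hsweep k l hkl)
      exact Finset.mem_filter.2 ⟨Finset.mem_univ _,
        lt_of_lt_of_le (Finset.mem_filter.1 hk).2 (pow_le_pow_left₀ (hq0 _) h1 2)⟩
    obtain ⟨k, hkeq⟩ := prefix_finset σ Etᶜ hdc hcone
    have himgne : Finset.image (⇑σ) (Finset.Iic k) ≠ Finset.univ := by
      rw [← hkeq]
      intro heq
      have hEt0 : Et = ∅ := by rwa [Finset.compl_eq_univ_iff] at heq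
      obtain ⟨i, hi⟩ := hne
      rw [hEt0] at hi
      exact absurd hi (Finset.notMem_empty i)
    have hmem : ((∑ i ∈ Etᶜ, ∑ j ∈ Etᶜᶜ, W i j) /
        min (∑ i ∈ Etᶜ, d i * τ i) (∑ i ∈ Etᶜᶜ, d i * τ i)) ∈ S := by
      rw [hSdef]
      simp only [Set.mem_setOf_eq]
      exact ⟨k, himgne, by rw [← hkeq]⟩
    have hlehk := csInf_le hbdd hmem
    rw [compl_compl] at hlehk
    have hcut : ∑ i ∈ Etᶜ, ∑ j ∈ Et, W i j = ∑ i ∈ Et, ∑ j ∈ Etᶜ, W i j := by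
      refine Finset.sum_comm.trans ?_
      exact Finset.sum_congr rfl fun i _ => Finset.sum_congr rfl fun j _ => hWs i j
    have hmin : min (∑ i ∈ Etᶜ, d i * τ i) (∑ i ∈ Et, d i * τ i) = ∑ i ∈ Et, d i * τ i := by
      rw [vol_compl Et]
      apply min_eq_right
      linarith
    rw [hcut, hmin] at hlehk
    exact (le_div_iff₀ hvolpos).1 hlehk
  -- chain bounds
  have hdeg : ∀ i, (∑ j, W i j) ≤ d i * τ i := by
    intro i
    rw [← hd i]
    exact le_mul_of_one_le_right (le_of_lt (hdpos i)) (hτ i)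
  have hcoP : h * ∑ i, (d i * τ i) * (p i)^2 ≤
      ∑ i, ∑ j, W i j * max ((p i)^2 - (p j)^2) 0 :=
    sweep_coarea W (fun i => d i * τ i) (fun i => le_of_lt (hΔpos i))
      (fun i => (p i)^2) (fun i => sq_nonneg _) h HHp
  have hchainP : h^2 * ∑ i, (d i * τ i) * (p i)^2 ≤ ∑ i, ∑ j, W i j * (p i - p j)^2 :=
    chain_bound W hWs hWnn (fun i => d i * τ i) (fun i => le_of_lt (hΔpos i)) hdeg
      p hp0 h hh0 hcoP
  have hcoQ : h * ∑ i, (d i * τ i) * (q i)^2 ≤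
      ∑ i, ∑ j, W i j * max ((q i)^2 - (q j)^2) 0 :=
    sweep_coarea W (fun i => d i * τ i) (fun i => le_of_lt (hΔpos i))
      (fun i => (q i)^2) (fun i => sq_nonneg _) h HHq
  have hchainQ : h^2 * ∑ i, (d i * τ i) * (q i)^2 ≤ ∑ i, ∑ j, W i j * (q i - q j)^2 :=
    chain_bound W hWs hWnn (fun i => d i * τ i) (fun i => le_of_lt (hΔpos i)) hdeg
      q hq0 h hh0 hcoQ
  -- Rayleigh quotient identities
  have huu : u ⬝ᵥ u = ∑ i, (d i * τ i) * (g i)^2 := by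
    rw [dotProduct]
    refine Finset.sum_congr rfl fun i _ => ?_
    rw [hu_eq i]
    calc g i * Real.sqrt (d i * τ i) * (g i * Real.sqrt (d i * τ i))
        = (Real.sqrt (d i * τ i) * Real.sqrt (d i * τ i)) * (g i)^2 := by ring
      _ = (d i * τ i) * (g i)^2 := by rw [hss i]
  have horth2 : ∑ i, (d i * τ i) * g i = 0 := by
    rw [dotProduct] at horth
    rw [← horth]
    refine Finset.sum_congr rfl fun i _ => ?_
    rw [hu_eq i]
    calc (d i * τ i) * g i
        = (Real.sqrt (d i * τ i) * Real.sqrt (d i * τ i)) * g i := by rw [hss i]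
      _ = g i * Real.sqrt (d i * τ i) * Real.sqrt (d i * τ i) := by ring
  have hDgpos : 0 < ∑ i, (d i * τ i) * (g i)^2 := by
    obtain ⟨i0, hi0⟩ : ∃ i, u i ≠ 0 := by
      by_contra hcon
      push_neg at hcon
      exact hu (funext hcon)
    have hg0 : g i0 ≠ 0 := by
      intro hgz
      apply hi0
      rw [hu_eq i0, hgz, zero_mul]
    refine Finset.sum_pos' (fun i _ => mul_nonneg (le_of_lt (hΔpos i)) (sq_nonneg _))
      ⟨i0, Finset.mem_univ _, ?_⟩
    exact mul_pos (hΔpos i0)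
      (lt_of_le_of_ne (sq_nonneg _) (Ne.symm (pow_ne_zero 2 hg0)))
  have hLentry : ∀ i j, L i j =
      (Real.sqrt (d i * τ i))⁻¹ * ((Matrix.diagonal d - W) i j) * (Real.sqrt (d j * τ j))⁻¹ := by
    intro i j
    rw [hL, Matrix.mul_diagonal, Matrix.diagonal_mul]
  have huLu : u ⬝ᵥ (L *ᵥ u) =
      (∑ i, d i * (g i)^2) - ∑ i, ∑ j, W i j * (g i * g j) := by
    have e : ∀ i, u i * (L *ᵥ u) i = d i * (g i)^2 - ∑ j, W i j * (g i * g j) := by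
      intro i
      rw [Matrix.mulVec, dotProduct, Finset.mul_sum]
      have e2 : ∀ j, u i * (L i j * u j) = g i * ((Matrix.diagonal d - W) i j) * g j := by
        intro j
        rw [hLentry i j, hu_eq i, hu_eq j]
        have hi := ne_of_gt (hsq i)
        have hj := ne_of_gt (hsq j)
        field_simp
      rw [Finset.sum_congr rfl fun j _ => e2 j]
      have e3 : ∀ j, g i * ((Matrix.diagonal d - W) i j) * g j =
          g i * (Matrix.diagonal d i j) * g j - W i j * (g i * g j) := by
        intro j
        rw [Matrix.sub_apply]
        ring
      rw [Finset.sum_congr rfl fun j _ => e3 j, Finset.sum_sub_distrib]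
      congr 1
      rw [Finset.sum_eq_single i]
      · rw [Matrix.diagonal_apply_eq]
        ring
      · intro j _ hji
        rw [Matrix.diagonal_apply_ne d (Ne.symm hji)]
        ring
      · intro habs
        exact absurd (Finset.mem_univ i) habs
    rw [dotProduct, Finset.sum_congr rfl fun i _ => e i, Finset.sum_sub_distrib]
  -- shift and split
  have hshift : ∑ i, (d i * τ i) * (g i)^2 ≤ ∑ i, (d i * τ i) * (g i - c)^2 := by
    have e : ∀ i, (d i * τ i) * (g i - c)^2 =
        (d i * τ i) * (g i)^2 - (2*c) * ((d i * τ i) * g i) + c^2 * (d i * τ i) :=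
      fun i => by ring
    rw [Finset.sum_congr rfl fun i (_ : i ∈ Finset.univ) => e i, Finset.sum_add_distrib,
      Finset.sum_sub_distrib, ← Finset.mul_sum, ← Finset.mul_sum, horth2]
    have h1 : 0 ≤ c^2 * ∑ i, d i * τ i := mul_nonneg (sq_nonneg c) (le_of_lt hV0)
    linarith
  have hsplitD : ∑ i, (d i * τ i) * (g i - c)^2 =
      (∑ i, (d i * τ i) * (p i)^2) + ∑ i, (d i * τ i) * (q i)^2 := by
    rw [← Finset.sum_add_distrib]
    refine Finset.sum_congr rfl fun i _ => ?_
    have hpq : (g i - c)^2 = (p i)^2 + (q i)^2 := by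
      rcases le_total (g i) c with hle | hle
      · simp only [hpdef, hqdef]
        rw [max_eq_right (by linarith), max_eq_left (by linarith)]
        ring
      · simp only [hpdef, hqdef]
        rw [max_eq_left (by linarith), max_eq_right (by linarith)]
        ring
    rw [hpq]
    ring
  have hNsplit :
      (∑ i, ∑ j, W i j * (p i - p j)^2) + (∑ i, ∑ j, W i j * (q i - q j)^2) ≤
      ∑ i, ∑ j, W i j * (g i - g j)^2 := by
    rw [← Finset.sum_add_distrib]
    refine Finset.sum_le_sum fun i _ => ?_
    rw [← Finset.sum_add_distrib]
    refine Finset.sum_le_sum fun j _ => ?_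
    have hkey := posneg_sq (g i - c) (g j - c)
    calc W i j * (p i - p j)^2 + W i j * (q i - q j)^2
        = W i j * ((p i - p j)^2 + (q i - q j)^2) := by ring
      _ ≤ W i j * (g i - g j)^2 := by
          refine mul_le_mul_of_nonneg_left ?_ (hWnn i j)
          simp only [hpdef, hqdef]
          rw [show c - g i = -(g i - c) from by ring, show c - g j = -(g j - c) from by ring,
            show g i - g j = (g i - c) - (g j - c) from by ring]
          exact hkey
  -- Laplacian quadratic form
  have hlap : ∑ i, ∑ j, W i j * (g i - g j)^2 =
      2 * ((∑ i, d i * (g i)^2) - ∑ i, ∑ j, W i j * (g i * g j)) := by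
    rw [laplacian_quadratic W hWs g]
    have e : ∑ i, (∑ j, W i j) * (g i)^2 = ∑ i, d i * (g i)^2 :=
      Finset.sum_congr rfl fun i _ => by rw [← hd i]
    rw [e]
  -- final assembly
  have hfinal : h^2 * ∑ i, (d i * τ i) * (g i)^2 ≤ ∑ i, ∑ j, W i j * (g i - g j)^2 := by
    have h1 : h^2 * ∑ i, (d i * τ i) * (g i)^2 ≤
        h^2 * ((∑ i, (d i * τ i) * (p i)^2) + ∑ i, (d i * τ i) * (q i)^2) := by
      refine mul_le_mul_of_nonneg_left ?_ (sq_nonneg h)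
      rw [← hsplitD]
      exact hshift
    have h2 : h^2 * ((∑ i, (d i * τ i) * (p i)^2) + ∑ i, (d i * τ i) * (q i)^2) =
        h^2 * (∑ i, (d i * τ i) * (p i)^2) + h^2 * ∑ i, (d i * τ i) * (q i)^2 :=
      mul_add _ _ _
    linarith
  rw [huLu, huu, div_le_div_iff₀ (by norm_num : (0:ℝ) < 2) hDgpos]
  linarith
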